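/- Let p be an odd prime and H a generalized hyperfocused arc of size 2n in PG(2,p) with blocking set B, with the normalized representation where the black point on the secant ⟨[E_i],[E_j]⟩ is [E_i+E_j]. If every 4-subset {E_i,E_j,E_k,E_l} of representatives with [E_i+E_j]=[E_k+E_l] (i,j,k,l distinct) satisfies E_i+E_j+E_k+E_l = 0, then 2n ≤ 4. -/

import Mathlib

open Projectivization

/-- The projective plane `PG(2,K)` as the projectivization of `K³`. -/
abbrev PG2 (K : Type) [Field K] := Projectivization K (Fin 3 → K)

/-- Three points of `PG(2,K)` are collinear: they lie on a common line
(the kernel of a nonzero linear functional). -/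
def Collin {K : Type} [Field K] (P Q R : PG2 K) : Prop :=
  ∃ f : (Fin 3 → K) →ₗ[K] K, f ≠ 0 ∧ f P.rep = 0 ∧ f Q.rep = 0 ∧ f R.rep = 0

/-- An arc: no three distinct points collinear. -/
def IsArc {K : Type} [Field K] (H : Finset (PG2 K)) : Prop :=
  ∀ P ∈ H, ∀ Q ∈ H, ∀ R ∈ H, P ≠ Q → P ≠ R → Q ≠ R → ¬ Collin P Q R

/-- A generalized hyperfocused arc with blocking set `B`:
`H` is an arc, `B` is disjoint from `H`, `|B| = |H| - 1`, and every
secant of `H` contains a point of `B`. -/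
def IsGHA {K : Type} [Field K] (H B : Finset (PG2 K)) : Prop :=
  IsArc H ∧ Disjoint H B ∧ B.card + 1 = H.card ∧
    ∀ P ∈ H, ∀ Q ∈ H, P ≠ Q → ∃ X ∈ B, Collin P Q X

/-- Projective equality of vector representatives. -/
def peq {K : Type} [Field K] (u v : Fin 3 → K) : Prop :=
  ∃ l : K, l ≠ 0 ∧ u = l • v

lemma exists_func {K : Type} [Field K] (u v : Fin 3 → K) :
    ∃ f : (Fin 3 → K) →ₗ[K] K, f ≠ 0 ∧ f u = 0 ∧ f v = 0 := by
  classical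
  have hlt : Submodule.span K ({u, v} : Set (Fin 3 → K)) < ⊤ := by
    apply span_lt_top_of_card_lt_finrank
    have h1 : ({u, v} : Set (Fin 3 → K)).toFinset ⊆ {u, v} := by
      intro x hx
      simpa using hx
    have h2 := Finset.card_le_card h1
    have h3 : ({u, v} : Finset (Fin 3 → K)).card ≤ 2 :=
      (Finset.card_insert_le _ _).trans (by simp)
    have h4 : Module.finrank K (Fin 3 → K) = 3 := Module.finrank_fin_fun K
    omega
  obtain ⟨f, hf, hmap⟩ := Submodule.exists_dual_map_eq_bot_of_lt_top hlt inferInstance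
  have hker : ∀ x ∈ Submodule.span K ({u, v} : Set (Fin 3 → K)), f x = 0 := by
    intro x hx
    have : f x ∈ Submodule.map f (Submodule.span K ({u, v} : Set (Fin 3 → K))) :=
      Submodule.mem_map_of_mem hx
    rw [hmap] at this
    exact (Submodule.mem_bot K).1 this
  exact ⟨f, hf, hker u (Submodule.subset_span (by simp)),
    hker v (Submodule.subset_span (by simp))⟩

lemma collin_of_mem_span {K : Type} [Field K] {u v w : Fin 3 → K}
    (hu : u ≠ 0) (hv : v ≠ 0) (hw : w ≠ 0)
    (h : w ∈ Submodule.span K ({u, v} : Set (Fin 3 → K))) :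
    Collin (Projectivization.mk K u hu) (Projectivization.mk K v hv)
      (Projectivization.mk K w hw) := by
  obtain ⟨f, hf, hfu, hfv⟩ := exists_func u v
  have hfw : f w = 0 := by
    have hsub : Submodule.span K ({u, v} : Set (Fin 3 → K)) ≤ LinearMap.ker f := by
      rw [Submodule.span_le]
      rintro x hx
      rcases hx with rfl | rfl <;> simpa
    simpa using hsub h
  refine ⟨f, hf, ?_, ?_, ?_⟩
  · obtain ⟨a, ha⟩ := Projectivization.exists_smul_eq_mk_rep K u hu
    rw [← ha, Units.smul_def, map_smul, hfu, smul_zero]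
  · obtain ⟨a, ha⟩ := Projectivization.exists_smul_eq_mk_rep K v hv
    rw [← ha, Units.smul_def, map_smul, hfv, smul_zero]
  · obtain ⟨a, ha⟩ := Projectivization.exists_smul_eq_mk_rep K w hw
    rw [← ha, Units.smul_def, map_smul, hfw, smul_zero]

/-- If in a normalized generalized hyperfocused arc every 4-subset with
`[Eᵢ+Eⱼ] = [Eₖ+Eₗ]` is special, then `2n ≤ 4`. -/
theorem statement16 {p : ℕ} [Fact p.Prime] (hodd : Odd p)
    [DecidableEq (PG2 (ZMod p))] (n : ℕ)
    (E : Fin (2 * n) → (Fin 3 → ZMod p)) (hE : ∀ i, E i ≠ 0)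
    (hinj : Function.Injective fun i => Projectivization.mk (ZMod p) (E i) (hE i))
    (B : Finset (PG2 (ZMod p)))
    (hGHA : IsGHA (Finset.image (fun i => Projectivization.mk (ZMod p) (E i) (hE i))
      Finset.univ) B)
    (hnz : ∀ i j : Fin (2 * n), i ≠ j → E i + E j ≠ 0)
    (hnorm : ∀ i j : Fin (2 * n), (h : i ≠ j) →
      Projectivization.mk (ZMod p) (E i + E j) (hnz i j h) ∈ B)
    (hspecial : ∀ i j k l : Fin (2 * n),
      i ≠ j → i ≠ k → i ≠ l → j ≠ k → j ≠ l → k ≠ l →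
      peq (E i + E j) (E k + E l) → E i + E j + E k + E l = 0) :
    2 * n ≤ 4 := by
  classical
  by_contra hle
  push_neg at hle
  -- black point assigned to an ordered pair
  let g : Fin (2*n) × Fin (2*n) → PG2 (ZMod p) := fun x =>
    if h : x.1 = x.2 then Projectivization.mk (ZMod p) (E x.1) (hE x.1)
    else Projectivization.mk (ZMod p) (E x.1 + E x.2) (hnz x.1 x.2 h)
  have hHcard : (Finset.image (fun i => Projectivization.mk (ZMod p) (E i) (hE i))
      Finset.univ).card = 2*n := by
    rw [Finset.card_image_of_injective _ hinj, Finset.card_univ, Fintype.card_fin]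
  have hBcard : B.card = 2*n - 1 := by
    have := hGHA.2.2.1
    rw [hHcard] at this
    omega
  have hmaps : ∀ x ∈ (Finset.univ : Finset (Fin (2*n))).offDiag, g x ∈ B := by
    intro x hx
    have hx' : x.1 ≠ x.2 := (Finset.mem_offDiag.1 hx).2.2
    show (if h : x.1 = x.2 then _ else _) ∈ B
    rw [dif_neg hx']
    exact hnorm x.1 x.2 hx'
  have hcards : B.card * (2*n-1) < (Finset.univ : Finset (Fin (2*n))).offDiag.card := by
    rw [Finset.offDiag_card, Finset.card_univ, Fintype.card_fin, hBcard]
    have h1 : 1 ≤ 2*n := by omega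
    have h2 : 2*n ≤ 2*n * (2*n) := Nat.le_mul_of_pos_left _ (by omega)
    zify [h1, h2]
    nlinarith [hle]
  obtain ⟨b, hbB, hbcard⟩ :=
    Finset.exists_lt_card_fiber_of_mul_lt_card_of_maps_to hmaps hcards
  set S : Finset (Fin (2*n) × Fin (2*n)) :=
    Finset.filter (fun x => g x = b) (Finset.univ : Finset (Fin (2*n))).offDiag with hSdef
  have hScard : 2*n - 1 < S.card := hbcard
  -- basic facts about S
  have hSne : ∀ x ∈ S, x.1 ≠ x.2 := by
    intro x hx
    exact (Finset.mem_offDiag.1 (Finset.mem_filter.1 hx).1).2.2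
  have hSmk : ∀ i j (h : i ≠ j), (i, j) ∈ S →
      Projectivization.mk (ZMod p) (E i + E j) (hnz i j h) = b := by
    intro i j h hij
    have := (Finset.mem_filter.1 hij).2
    show Projectivization.mk (ZMod p) (E i + E j) (hnz i j h) = b
    rw [show Projectivization.mk (ZMod p) (E i + E j) (hnz i j h) = g (i, j) by
      show _ = if h' : (i, j).1 = (i, j).2 then _ else _
      rw [dif_neg h]]
    exact this
  have hSmk' : ∀ i j (h : i ≠ j),
      Projectivization.mk (ZMod p) (E i + E j) (hnz i j h) = b → (i, j) ∈ S := by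
    intro i j h hb
    refine Finset.mem_filter.2 ⟨Finset.mem_offDiag.2 ⟨Finset.mem_univ _, Finset.mem_univ _, h⟩, ?_⟩
    show (if h' : (i, j).1 = (i, j).2 then _ else _) = b
    rw [dif_neg h]
    exact hb
  have hsym : ∀ i j, (i, j) ∈ S → (j, i) ∈ S := by
    intro i j hij
    have h : i ≠ j := hSne _ hij
    have hb := hSmk i j h hij
    apply hSmk' j i h.symm
    rw [← hb, Projectivization.mk_eq_mk_iff']
    exact ⟨1, by rw [one_smul, add_comm]⟩
  have huniq : ∀ i j k, (i, j) ∈ S → (i, k) ∈ S → j = k := by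
    intro i j k hj hk
    by_contra hjk
    have hij : i ≠ j := hSne _ hj
    have hik : i ≠ k := hSne _ hk
    have heq : Projectivization.mk (ZMod p) (E i + E j) (hnz i j hij) =
        Projectivization.mk (ZMod p) (E i + E k) (hnz i k hik) :=
      (hSmk i j hij hj).trans (hSmk i k hik hk).symm
    rw [Projectivization.mk_eq_mk_iff'] at heq
    obtain ⟨a, ha⟩ := heq
    have hspan : E j ∈ Submodule.span (ZMod p) ({E i, E k} : Set (Fin 3 → ZMod p)) := by
      have hEj : E j = (a - 1) • E i + a • E k := by
        have h1 : (a - 1) • E i + a • E k = a • (E i + E k) - E i := by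
          rw [smul_add, sub_smul, one_smul]
          abel
        rw [h1, ha]
        abel
      rw [hEj]
      exact Submodule.add_mem _
        (Submodule.smul_mem _ _ (Submodule.subset_span (by simp)))
        (Submodule.smul_mem _ _ (Submodule.subset_span (by simp)))
    have hcol := collin_of_mem_span (hE i) (hE k) (hE j) hspan
    have hH : ∀ m : Fin (2*n), Projectivization.mk (ZMod p) (E m) (hE m) ∈
        Finset.image (fun i => Projectivization.mk (ZMod p) (E i) (hE i)) Finset.univ :=
      fun m => Finset.mem_image_of_mem _ (Finset.mem_univ m)
    exact hGHA.1 _ (hH i) _ (hH k) _ (hH j)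
      (fun h => hik (hinj h)) (fun h => hij (hinj h)) (fun h => hjk ((hinj h).symm)) hcol
  have havoid : ∀ u v a c : Fin (2*n), (u, v) ∈ S → (a, c) ∈ S → u ≠ a → u ≠ c →
      v ≠ a ∧ v ≠ c := by
    intro u v a c huv hac hua huc
    constructor
    · intro h
      have h1 : (a, u) ∈ S := by
        have := hsym u v huv
        rwa [h] at this
      exact huc (huniq a u c h1 hac)
    · intro h
      have h1 : (c, u) ∈ S := by
        have := hsym u v huv
        rwa [h] at this
      have h2 : (c, a) ∈ S := hsym a c hac
      exact hua (huniq c u a h1 h2)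
  -- removing the pairs meeting a given pair costs at most 2
  have hstep : ∀ (W : Finset (Fin (2*n) × Fin (2*n))) (w : Fin (2*n) × Fin (2*n)),
      W ⊆ S → w ∈ S →
      W.card ≤ (W.filter (fun z => z.1 ≠ w.1 ∧ z.1 ≠ w.2)).card + 2 := by
    intro W w hWS hwS
    have hwS' : (w.1, w.2) ∈ S := by simpa using hwS
    have hsub : W \ W.filter (fun z => z.1 ≠ w.1 ∧ z.1 ≠ w.2) ⊆ {w, (w.2, w.1)} := by
      intro y hy
      rw [Finset.mem_sdiff] at hy
      obtain ⟨hyW, hyT⟩ := hy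
      have hyS : (y.1, y.2) ∈ S := by simpa using hWS hyW
      have hnp : ¬(y.1 ≠ w.1 ∧ y.1 ≠ w.2) := fun hp => hyT (Finset.mem_filter.2 ⟨hyW, hp⟩)
      rcases not_and_or.1 hnp with h | h
      · rw [not_ne_iff] at h
        have hy1 : (w.1, y.2) ∈ S := by rwa [h] at hyS
        have h2 : y.2 = w.2 := huniq w.1 y.2 w.2 hy1 hwS'
        exact Finset.mem_insert.2 (Or.inl (Prod.ext h h2))
      · rw [not_ne_iff] at h
        have hy1 : (w.2, y.2) ∈ S := by rwa [h] at hyS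
        have hwS'' : (w.2, w.1) ∈ S := hsym _ _ hwS'
        have h2 : y.2 = w.1 := huniq w.2 y.2 w.1 hy1 hwS''
        refine Finset.mem_insert.2 (Or.inr ?_)
        rw [Finset.mem_singleton]
        exact Prod.ext h h2
    have h1 : (W \ W.filter (fun z => z.1 ≠ w.1 ∧ z.1 ≠ w.2)).card ≤ 2 :=
      (Finset.card_le_card hsub).trans ((Finset.card_insert_le _ _).trans (by simp))
    have h2 := Finset.card_sdiff_of_subset (Finset.filter_subset (fun z => z.1 ≠ w.1 ∧ z.1 ≠ w.2) W)
    have h3 := Finset.card_filter_le W (fun z => z.1 ≠ w.1 ∧ z.1 ≠ w.2)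
    omega
  -- extract three pairwise disjoint pairs
  obtain ⟨x, hxS⟩ := Finset.card_pos.1 (show 0 < S.card by omega)
  have hxS' : (x.1, x.2) ∈ S := by simpa using hxS
  have hT := hstep S x (subset_refl S) hxS
  set T := S.filter (fun z => z.1 ≠ x.1 ∧ z.1 ≠ x.2) with hTdef
  obtain ⟨y, hyT⟩ := Finset.card_pos.1 (show 0 < T.card by omega)
  have hyS : y ∈ S := (Finset.mem_filter.1 hyT).1
  have hyS' : (y.1, y.2) ∈ S := by simpa using hyS
  have hy1 : y.1 ≠ x.1 ∧ y.1 ≠ x.2 := (Finset.mem_filter.1 hyT).2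
  have hy2 : y.2 ≠ x.1 ∧ y.2 ≠ x.2 := havoid y.1 y.2 x.1 x.2 hyS' hxS' hy1.1 hy1.2
  have hU := hstep T y (Finset.filter_subset _ _) hyS
  set U := T.filter (fun z => z.1 ≠ y.1 ∧ z.1 ≠ y.2) with hUdef
  obtain ⟨z, hzU⟩ := Finset.card_pos.1 (show 0 < U.card by omega)
  have hzT : z ∈ T := (Finset.mem_filter.1 hzU).1
  have hzS : z ∈ S := (Finset.mem_filter.1 hzT).1
  have hzS' : (z.1, z.2) ∈ S := by simpa using hzS
  have hz1y : z.1 ≠ y.1 ∧ z.1 ≠ y.2 := (Finset.mem_filter.1 hzU).2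
  have hz1x : z.1 ≠ x.1 ∧ z.1 ≠ x.2 := (Finset.mem_filter.1 hzT).2
  have hz2x : z.2 ≠ x.1 ∧ z.2 ≠ x.2 := havoid z.1 z.2 x.1 x.2 hzS' hxS' hz1x.1 hz1x.2
  have hz2y : z.2 ≠ y.1 ∧ z.2 ≠ y.2 := havoid z.1 z.2 y.1 y.2 hzS' hyS' hz1y.1 hz1y.2
  -- projective equality gives peq
  have hpeq : ∀ u v : Fin (2*n) × Fin (2*n), u ∈ S → v ∈ S →
      peq (E u.1 + E u.2) (E v.1 + E v.2) := by
    intro u v hu hv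
    have h1 := hSmk u.1 u.2 (hSne u hu) (by simpa using hu)
    have h2 := hSmk v.1 v.2 (hSne v hv) (by simpa using hv)
    have heq := h1.trans h2.symm
    rw [Projectivization.mk_eq_mk_iff'] at heq
    obtain ⟨a, ha⟩ := heq
    refine ⟨a, ?_, ha.symm⟩
    intro h0
    apply hnz u.1 u.2 (hSne u hu)
    rw [← ha, h0, zero_smul]
  -- special 4-tuples
  have h12 := hspecial x.1 x.2 y.1 y.2 (hSne x hxS) hy1.1.symm hy2.1.symm
    hy1.2.symm hy2.2.symm (hSne y hyS) (hpeq x y hxS hyS)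
  have h13 := hspecial x.1 x.2 z.1 z.2 (hSne x hxS) hz1x.1.symm hz2x.1.symm
    hz1x.2.symm hz2x.2.symm (hSne z hzS) (hpeq x z hxS hzS)
  have h23 := hspecial y.1 y.2 z.1 z.2 (hSne y hyS) hz1y.1.symm hz2y.1.symm
    hz1y.2.symm hz2y.2.symm (hSne z hzS) (hpeq y z hyS hzS)
  -- derive a contradiction using p odd
  have hAA : (E x.1 + E x.2) + (E x.1 + E x.2) = 0 := by
    linear_combination h12 + h13 - h23
  rw [← two_smul (ZMod p)] at hAA
  have h2ne : (2 : ZMod p) ≠ 0 := by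
    intro h
    have h' : ((2 : ℕ) : ZMod p) = 0 := by exact_mod_cast h
    rw [ZMod.natCast_eq_zero_iff] at h'
    have hp := (Fact.out : p.Prime)
    have hp2 : p = 2 := (Nat.prime_dvd_prime_iff_eq hp Nat.prime_two).1 h'
    rw [hp2] at hodd
    exact (by decide : ¬ Odd 2) hodd
  have := (smul_eq_zero.1 hAA).resolve_left h2ne
  exact hnz x.1 x.2 (hSne x hxS) this
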